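/- Let K be a differential ring with derivation D, fix a_1 ∈ K, and let ∇ : K → K be the map ∇(y) = D(y) + a_1*y. For every u ∈ K, every natural number m, and every y ∈ K, the m-th iterate of the operator y ↦ ∇(y) + u*y applied to y equals Σ_{j=0}^{m} C(m,j) * Q_{m−j}(u) * ∇^j(y), where C(m,j) denotes the binomial coefficient and ∇^j is the j-th iterate of ∇. -/

import Mathlib

/-- Covariant Bell polynomials relative to `c`:
`Q 0 = 1`, `Q (m+1) = Δ_c (Q m) + u * Q m` where `Δ_c b = D b + c*b - b*c`. -/
def qBell {K : Type*} [Ring K] (D : K → K) (c u : K) : ℕ → K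
  | 0 => 1
  | m + 1 =>
      (D (qBell D c u m) + c * qBell D c u m - qBell D c u m * c)
        + u * qBell D c u m

private lemma qBell_key {K : Type*} [Ring K] (D : K → K)
    (hmul : ∀ a b : K, D (a * b) = D a * b + a * D b)
    (a1 u : K) (k : ℕ) (x : K) :
    (D (qBell D a1 u k * x) + a1 * (qBell D a1 u k * x)) + u * (qBell D a1 u k * x)
      = qBell D a1 u (k + 1) * x + qBell D a1 u k * (D x + a1 * x) := by
  rw [hmul]
  show _ = ((D (qBell D a1 u k) + a1 * qBell D a1 u k - qBell D a1 u k * a1)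
        + u * qBell D a1 u k) * x + _
  noncomm_ring

private lemma pascal_sum {M : Type*} [AddCommGroup M] (m : ℕ) (h : ℕ → M) :
    ∑ j ∈ Finset.range (m + 2), (m + 1).choose j • h j
      = ∑ j ∈ Finset.range (m + 1), m.choose j • h j
        + ∑ j ∈ Finset.range (m + 1), m.choose j • h (j + 1) := by
  have h1 : ∑ j ∈ Finset.range (m + 2), (m + 1).choose j • h j
      = ∑ j ∈ Finset.range (m + 1), (m + 1).choose (j + 1) • h (j + 1)
          + (m + 1).choose 0 • h 0 := Finset.sum_range_succ' _ _
  have h2 : ∑ j ∈ Finset.range (m + 2), m.choose j • h j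
      = ∑ j ∈ Finset.range (m + 1), m.choose (j + 1) • h (j + 1)
          + m.choose 0 • h 0 := Finset.sum_range_succ' _ _
  have h3 : ∑ j ∈ Finset.range (m + 2), m.choose j • h j
      = ∑ j ∈ Finset.range (m + 1), m.choose j • h j := by
    rw [Finset.sum_range_succ, Nat.choose_succ_self, zero_smul, add_zero]
  rw [h1]
  have h4 : ∀ j, (m + 1).choose (j + 1) • h (j + 1)
      = m.choose j • h (j + 1) + m.choose (j + 1) • h (j + 1) := by
    intro j
    rw [Nat.choose_succ_succ, add_smul]
  simp only [h4, Finset.sum_add_distrib]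
  have h5 : ∑ j ∈ Finset.range (m + 1), m.choose (j + 1) • h (j + 1)
      = ∑ j ∈ Finset.range (m + 1), m.choose j • h j - m.choose 0 • h 0 := by
    rw [← h3, h2]; abel
  rw [h5]
  simp only [Nat.choose_zero_right, one_smul]
  abel

/-- normal ordering of `(∇ + u)^m` with `∇ y = D y + a₁ * y`. -/
theorem nabla_shifted_normal_order {K : Type*} [Ring K] (D : K → K)
    (hadd : ∀ a b : K, D (a + b) = D a + D b)
    (hmul : ∀ a b : K, D (a * b) = D a * b + a * D b)
    (a1 : K) (u : K) (m : ℕ) (y : K) :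
    (fun z => (D z + a1 * z) + u * z)^[m] y
      = ∑ j ∈ Finset.range (m + 1),
          (m.choose j : K) * qBell D a1 u (m - j)
            * (fun z => D z + a1 * z)^[j] y := by
  have hD0 : D 0 = 0 := by have h := hadd 0 0; simpa using h
  induction m with
  | zero => simp [qBell]
  | succ m ih =>
    set N : ℕ → K := fun j => (fun z => D z + a1 * z)^[j] y with hN
    let Th : K →+ K :=
      { toFun := fun z => (D z + a1 * z) + u * z
        map_zero' := by simp [hD0]
        map_add' := by
          intro a b
          show (D (a + b) + a1 * (a + b)) + u * (a + b) = _
          rw [hadd, mul_add, mul_add]; abel }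
    have hstep : (fun z => (D z + a1 * z) + u * z)^[m + 1] y
        = Th ((fun z => (D z + a1 * z) + u * z)^[m] y) :=
      Function.iterate_succ_apply' _ _ _
    rw [hstep, ih, map_sum]
    have hterm : ∀ j ∈ Finset.range (m + 1),
        Th ((m.choose j : K) * qBell D a1 u (m - j) * N j)
          = m.choose j • (qBell D a1 u (m + 1 - j) * N j)
            + m.choose j • (qBell D a1 u (m - j) * N (j + 1)) := by
      intro j hj
      have hj' : j ≤ m := Nat.lt_succ_iff.mp (Finset.mem_range.mp hj)
      have hc : (m.choose j : K) * qBell D a1 u (m - j) * N j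
          = m.choose j • (qBell D a1 u (m - j) * N j) := by
        rw [nsmul_eq_mul, mul_assoc]
      rw [hc, map_nsmul]
      have hTh : Th (qBell D a1 u (m - j) * N j)
          = qBell D a1 u (m - j + 1) * N j + qBell D a1 u (m - j) * (D (N j) + a1 * N j) :=
        qBell_key D hmul a1 u (m - j) (N j)
      have hN1 : D (N j) + a1 * N j = N (j + 1) :=
        (Function.iterate_succ_apply' (fun z => D z + a1 * z) j y).symm
      rw [hTh, hN1, smul_add, Nat.sub_add_comm hj']
    rw [Finset.sum_congr rfl hterm, Finset.sum_add_distrib]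
    have := pascal_sum (M := K) m (fun j => qBell D a1 u (m + 1 - j) * N j)
    have hgoal : ∑ j ∈ Finset.range (m + 1 + 1),
        ((m + 1).choose j : K) * qBell D a1 u (m + 1 - j) * N j
        = ∑ j ∈ Finset.range (m + 2),
            (m + 1).choose j • (qBell D a1 u (m + 1 - j) * N j) := by
      apply Finset.sum_congr rfl
      intro j _
      rw [nsmul_eq_mul, mul_assoc]
    rw [hgoal, this]
    congr 1
    apply Finset.sum_congr rfl
    intro j _
    rw [Nat.succ_sub_succ]
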